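/- arXiv:math/0411373 — 4 statements merged into one kernel-verified Lean document; each statement's English description precedes it below -/
import Mathlib

section
/- Let F be a finite-dimensional commutative étale algebra over ℚ (e.g. a number field), and let M be a finite-dimensional ℚ-vector space equipped with an F-module structure. Then M is a free F-module if and only if for every a ∈ F one has Tr_ℚ(a; M) · [F:ℚ] = (dim_ℚ M) · Tr_{F/ℚ}(a), where Tr_ℚ(a; M) is the trace of the ℚ-linear map given by multiplication by a on M, and Tr_{F/ℚ} is the algebra trace. -/
namespace FreeTraceAux
open IsArtinianRing Module LinearMap

section Ring
variable (F : Type*) [CommRing F] [Algebra ℚ F] [FiniteDimensional ℚ F] [IsReduced F]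

instance artin : IsArtinianRing F := isArtinian_of_tower ℚ inferInstance

abbrev Idx := MaximalSpectrum F

noncomputable local instance : DecidableEq (Idx F) := Classical.decEq _

noncomputable instance : Fintype (Idx F) :=
  Fintype.ofFinite _

noncomputable instance fieldQuot (I : Idx F) : Field (F ⧸ I.1) :=
  have := I.2; Ideal.Quotient.field I.1

noncomputable def eps (I : Idx F) : F := (equivPi F).symm (Pi.single I 1)

variable {F}

noncomputable local instance inst_s1 : DecidableEq (Idx F) := Classical.decEq _

lemma mk_eps (I J : Idx F) :
    Ideal.Quotient.mk I.1 (eps F J) = if I = J then 1 else 0 := by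
  have : Ideal.Quotient.mk I.1 (eps F J) = equivPi F (eps F J) I := rfl
  rw [this, eps, AlgEquiv.apply_symm_apply]
  rcases eq_or_ne I J with rfl | h
  · rw [if_pos rfl, Pi.single_eq_same]
  · rw [if_neg h, Pi.single_eq_of_ne h]

lemma mul_eps_eq_zero {x : F} (I : Idx F) (hx : x ∈ I.1) : x * eps F I = 0 := by
  apply (equivPi F).injective
  rw [map_mul, map_zero]
  funext J
  have h1 : equivPi F (eps F I) J = Ideal.Quotient.mk J.1 (eps F I) := rfl
  have h2 : equivPi F x J = Ideal.Quotient.mk J.1 x := rfl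
  rcases eq_or_ne J I with rfl | hJ
  · rw [Pi.mul_apply, h2, Ideal.Quotient.eq_zero_iff_mem.mpr hx, zero_mul, Pi.zero_apply]
  · rw [Pi.mul_apply, h1, mk_eps, if_neg hJ, mul_zero, Pi.zero_apply]

lemma eps_mul_eps (I J : Idx F) : eps F I * eps F J = if I = J then eps F I else 0 := by
  have hI : ∀ K L : Idx F, equivPi F (eps F L) K = Ideal.Quotient.mk K.1 (eps F L) :=
    fun _ _ => rfl
  rcases eq_or_ne I J with rfl | h
  · rw [if_pos rfl]
    apply (equivPi F).injective
    rw [map_mul]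
    funext K
    rw [Pi.mul_apply, hI K I]
    show Ideal.Quotient.mk K.1 (eps F I) * Ideal.Quotient.mk K.1 (eps F I) = _
    rw [mk_eps]
    split_ifs <;> simp
  · rw [if_neg h]
    apply (equivPi F).injective
    rw [map_mul, map_zero]
    funext K
    rw [Pi.mul_apply, Pi.zero_apply]
    show Ideal.Quotient.mk K.1 (eps F I) * Ideal.Quotient.mk K.1 (eps F J) = 0
    rw [mk_eps, mk_eps]
    split_ifs with h1 h2 <;> simp_all

lemma sum_eps : ∑ I : Idx F, eps F I = 1 := by
  apply (equivPi F).injective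
  rw [map_sum, map_one]
  have : ∀ I : Idx F, equivPi F (eps F I) = Pi.single I 1 := fun I =>
    (equivPi F).apply_symm_apply _
  simp only [this]
  exact Finset.univ_sum_single (1 : ∀ I : Idx F, F ⧸ I.1)

lemma eq_zero_of_mem_all {x : F} (h : ∀ I : Idx F, x ∈ I.1) : x = 0 := by
  have hn : IsNilpotent x := by
    rw [nilpotent_iff_mem_prime]
    intro J hJ
    exact h ⟨J, (IsArtinianRing.isPrime_iff_isMaximal J).mp hJ⟩
  exact hn.eq_zero

end Ring

section Mod
variable (F : Type*) [CommRing F] [Algebra ℚ F] [FiniteDimensional ℚ F] [IsReduced F]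
variable (M : Type*) [AddCommGroup M] [Module ℚ M] [Module F M] [IsScalarTower ℚ F M]
  [FiniteDimensional ℚ M]

/-- The `I`-component of `M`, namely `εᵢ • M`. -/
noncomputable def comp (I : Idx F) : Submodule F M :=
  LinearMap.range (LinearMap.lsmul F M (eps F I))

variable {F M}

lemma mem_comp {I : Idx F} {n : M} : n ∈ comp F M I ↔ ∃ m, eps F I • m = n := Iff.rfl

lemma eps_smul_of_mem {I : Idx F} {n : M} (hn : n ∈ comp F M I) : eps F I • n = n := by
  obtain ⟨m, rfl⟩ := hn
  simp only [LinearMap.lsmul_apply]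
  rw [smul_smul, eps_mul_eps, if_pos rfl]

lemma eps_smul_of_mem_ne {I J : Idx F} (h : J ≠ I) {n : M} (hn : n ∈ comp F M I) :
    eps F J • n = 0 := by
  obtain ⟨m, rfl⟩ := hn
  simp only [LinearMap.lsmul_apply]
  rw [smul_smul, eps_mul_eps, if_neg h, zero_smul]

lemma sum_eps_smul (m : M) : ∑ I : Idx F, eps F I • m = m := by
  rw [← Finset.sum_smul, sum_eps, one_smul]

lemma comp_torsion (I : Idx F) : Module.IsTorsionBySet F (comp F M I) I.1 := by
  rintro ⟨n, hn⟩ ⟨x, hx⟩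
  obtain ⟨m, rfl⟩ := hn
  apply Subtype.ext
  show x • (LinearMap.lsmul F M (eps F I)) m = 0
  simp only [LinearMap.lsmul_apply]
  rw [smul_smul, mul_eps_eq_zero I hx, zero_smul]

noncomputable instance compModule (I : Idx F) : Module (F ⧸ I.1) (comp F M I) :=
  (comp_torsion I).module

lemma mk_smul_comp (I : Idx F) (x : F) (n : comp F M I) :
    Ideal.Quotient.mk I.1 x • n = x • n :=
  (comp_torsion I).mk_smul x n

instance (I : Idx F) : IsScalarTower ℚ (F ⧸ I.1) (comp F M I) := by
  constructor
  intro q k n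
  obtain ⟨x, rfl⟩ := Ideal.Quotient.mk_surjective k
  rw [mk_smul_comp]
  have : q • (Ideal.Quotient.mk I.1 x) = Ideal.Quotient.mk I.1 (q • x) := rfl
  rw [this, mk_smul_comp, smul_assoc]

instance compFD (I : Idx F) : FiniteDimensional (F ⧸ I.1) (comp F M I) := by
  have : FiniteDimensional ℚ (comp F M I) := by
    have : FiniteDimensional ℚ ((comp F M I).restrictScalars ℚ) := inferInstance
    exact this
  exact Module.Finite.of_restrictScalars_finite ℚ (F ⧸ I.1) (comp F M I)

/-- trace of multiplication by `εᵢ` is the dimension of the `I`-component. -/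
lemma trace_lsmul_eps (I : Idx F) :
    LinearMap.trace ℚ M (Algebra.lsmul ℚ ℚ M (eps F I)) =
      (finrank ℚ ((comp F M I).restrictScalars ℚ) : ℚ) := by
  have hproj : LinearMap.IsProj ((comp F M I).restrictScalars ℚ)
      (Algebra.lsmul ℚ ℚ M (eps F I)) := by
    constructor
    · intro m
      exact ⟨m, rfl⟩
    · intro x hx
      exact eps_smul_of_mem hx
  exact hproj.trace

lemma finrank_comp (I : Idx F) :
    finrank ℚ ((comp F M I).restrictScalars ℚ)
      = finrank (F ⧸ I.1) (comp F M I) * finrank ℚ (F ⧸ I.1) := by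
  have h := Module.finrank_mul_finrank ℚ (F ⧸ I.1) (comp F M I)
  have : finrank ℚ ((comp F M I).restrictScalars ℚ) = finrank ℚ (comp F M I) := rfl
  rw [this, ← h, mul_comm]

end Mod

section RankOne
variable {F : Type*} [CommRing F] [Algebra ℚ F] [FiniteDimensional ℚ F] [IsReduced F]

lemma eps_ne_zero [Nontrivial F] (I : Idx F) : eps F I ≠ 0 := by
  intro h
  have := mk_eps (F := F) I I
  rw [h, if_pos rfl, map_zero] at this
  exact one_ne_zero this.symm

lemma finrank_comp_self [Nontrivial F] (I : Idx F) :
    finrank (F ⧸ I.1) (comp F F I) = 1 := by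
  have hmem : eps F I ∈ comp F F I :=
    ⟨1, by simp only [LinearMap.lsmul_apply]; rw [smul_eq_mul, mul_one]⟩
  apply finrank_eq_one (⟨eps F I, hmem⟩ : comp F F I)
  · intro h
    exact eps_ne_zero I (congrArg Subtype.val h)
  · rintro ⟨w, hw⟩
    obtain ⟨x, rfl⟩ := hw
    refine ⟨Ideal.Quotient.mk I.1 x, ?_⟩
    rw [mk_smul_comp]
    apply Subtype.ext
    show x • eps F I = eps F I • x
    rw [smul_eq_mul, smul_eq_mul, mul_comm]

end RankOne

section TraceFree
variable {F : Type*} [CommRing F] [Algebra ℚ F] [FiniteDimensional ℚ F]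
variable {M : Type*} [AddCommGroup M] [Module ℚ M] [Module F M] [IsScalarTower ℚ F M]

/-- Trace on a free module over the algebra. -/
lemma trace_lsmul_of_basis {σ : Type*} [Fintype σ] (c : Basis σ F M) (a : F) :
    LinearMap.trace ℚ M (Algebra.lsmul ℚ ℚ M a)
      = (Fintype.card σ : ℚ) * Algebra.trace ℚ F a := by
  classical
  let b := Module.finBasis ℚ F
  let B := b.smulTower c
  rw [LinearMap.trace_eq_matrix_trace ℚ B, Matrix.trace]
  have hdiag : ∀ p : Fin (finrank ℚ F) × σ,
      (LinearMap.toMatrix B B (Algebra.lsmul ℚ ℚ M a)) p p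
        = b.repr (a * b p.1) p.1 := by
    intro p
    rw [LinearMap.toMatrix_apply]
    have h1 : (Algebra.lsmul ℚ ℚ M a) (B p) = (a * b p.1) • c p.2 := by
      show a • B p = _
      rw [Basis.smulTower_apply, smul_smul]
    rw [h1, Basis.smulTower_repr, map_smul, Basis.repr_self, Finsupp.smul_apply,
      Finsupp.single_eq_same, smul_eq_mul, mul_one]
  simp only [Matrix.diag_apply]
  rw [Finset.sum_congr rfl (fun p _ => hdiag p), ← Finset.univ_product_univ,
    Finset.sum_product_right]
  have htr : ∑ i, b.repr (a * b i) i = Algebra.trace ℚ F a := by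
    rw [Algebra.trace_eq_matrix_trace b, Matrix.trace]
    simp only [Matrix.diag_apply]
    exact Finset.sum_congr rfl fun i _ => by
      simp [Algebra.leftMulMatrix_apply, LinearMap.toMatrix_apply]
  rw [Finset.sum_congr rfl (fun j _ => htr), Finset.sum_const, nsmul_eq_mul, Finset.card_univ]

end TraceFree

end FreeTraceAux

open FreeTraceAux Module LinearMap

/-- An étale commutative algebra over ℚ (finite-dimensional and reduced, hence a
finite product of number fields).  A finite-dimensional `F`-module `M` is free over `F`
iff the trace condition `Tr_ℚ(a; M) · [F:ℚ] = (dim_ℚ M) · Tr_{F/ℚ}(a)` holds for all `a ∈ F`. -/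
theorem free_iff_trace_condition
    (F : Type*) [CommRing F] [Algebra ℚ F] [FiniteDimensional ℚ F] [IsReduced F]
    (M : Type*) [AddCommGroup M] [Module ℚ M] [Module F M] [IsScalarTower ℚ F M]
    [FiniteDimensional ℚ M] :
    Module.Free F M ↔
      ∀ a : F,
        LinearMap.trace ℚ M (Algebra.lsmul ℚ ℚ M a) * (Module.finrank ℚ F : ℚ)
          = (Module.finrank ℚ M : ℚ) * Algebra.trace ℚ F a := by
  classical
  constructor
  · intro hfree a
    haveI : Module.Finite F M := Module.Finite.of_restrictScalars_finite ℚ F M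
    let c := Module.Free.chooseBasis F M
    rw [FreeTraceAux.trace_lsmul_of_basis c a]
    have hdim : (finrank ℚ M : ℚ)
        = (Fintype.card (Module.Free.ChooseBasisIndex F M) : ℚ) * (finrank ℚ F : ℚ) := by
      have h := Module.finrank_eq_card_basis ((Module.finBasis ℚ F).smulTower c)
      rw [Fintype.card_prod, Fintype.card_fin] at h
      rw [h]; push_cast; ring
    rw [hdim]; ring
  · intro hcond
    rcases subsingleton_or_nontrivial F with hF | hF
    · haveI : Subsingleton M := Module.subsingleton F M
      infer_instance
    · have rpos : 0 < finrank ℚ F := Module.finrank_pos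
      have key : ∀ I : Idx F, finrank (F ⧸ I.1) (comp F M I) * finrank ℚ F = finrank ℚ M := by
        intro I
        have h := hcond (eps F I)
        rw [trace_lsmul_eps, finrank_comp] at h
        have hlm : (Algebra.lmul ℚ F) (eps F I) = Algebra.lsmul ℚ ℚ F (eps F I) := by
          ext y; show eps F I * y = eps F I • y; rw [smul_eq_mul]
        rw [Algebra.trace_apply, hlm, trace_lsmul_eps, finrank_comp, finrank_comp_self,
          one_mul] at h
        have epos : (0:ℚ) < (finrank ℚ (F ⧸ I.1) : ℚ) := by
          exact_mod_cast (Module.finrank_pos : 0 < finrank ℚ (F ⧸ I.1))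
        have h3 : ((finrank (F ⧸ I.1) (comp F M I) : ℚ) * (finrank ℚ F : ℚ))
              * (finrank ℚ (F ⧸ I.1) : ℚ)
            = (finrank ℚ M : ℚ) * (finrank ℚ (F ⧸ I.1) : ℚ) := by
          push_cast at h ⊢
          linear_combination h
        have h4 := mul_right_cancel₀ (ne_of_gt epos) h3
        exact_mod_cast h4
      have hd : ∀ I : Idx F, finrank (F ⧸ I.1) (comp F M I) = finrank ℚ M / finrank ℚ F :=
        fun I => (Nat.div_eq_of_eq_mul_left rpos (key I).symm).symm
      set d := finrank ℚ M / finrank ℚ F with hdd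
      let bI : ∀ I : Idx F, Basis (Fin d) (F ⧸ I.1) (comp F M I) := fun I =>
        (Module.finBasis (F ⧸ I.1) (comp F M I)).reindex (finCongr (hd I))
      let w : Fin d → M := fun j => ∑ I : Idx F, ((bI I j : M))
      have hw : ∀ (I : Idx F) (j : Fin d), eps F I • w j = (bI I j : M) := by
        intro I j
        show eps F I • ∑ J : Idx F, ((bI J j : M)) = _
        rw [Finset.smul_sum, Finset.sum_eq_single I]
        · exact eps_smul_of_mem (bI I j).2
        · exact fun J _ hJ => eps_smul_of_mem_ne hJ.symm (bI J j).2
        · exact fun h => absurd (Finset.mem_univ I) h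
      have indep : LinearIndependent F w := by
        rw [Fintype.linearIndependent_iff]
        intro g hg j
        apply eq_zero_of_mem_all
        intro I
        have h1 : ∑ j', g j' • (bI I j' : M) = 0 := by
          calc ∑ j', g j' • (bI I j' : M) = ∑ j', eps F I • (g j' • w j') := by
                refine Finset.sum_congr rfl fun j' _ => ?_
                rw [smul_comm, hw]
            _ = eps F I • ∑ j', g j' • w j' := (Finset.smul_sum).symm
            _ = 0 := by rw [hg, smul_zero]
        have h3 : ∑ j', g j' • bI I j' = (0 : comp F M I) := by
          apply Subtype.ext
          simpa using h1
        have h5 := (bI I).linearIndependent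
        rw [Fintype.linearIndependent_iff] at h5
        have h6 := h5 (fun j' => Ideal.Quotient.mk I.1 (g j')) ?_ j
        · rwa [Ideal.Quotient.eq_zero_iff_mem] at h6
        · rw [Finset.sum_congr rfl fun j' _ => mk_smul_comp I (g j') (bI I j')]
          exact h3
      have span_top : ⊤ ≤ Submodule.span F (Set.range w) := by
        intro m _
        have hm : m = ∑ I : Idx F, eps F I • m := (sum_eps_smul m).symm
        rw [hm]
        refine Submodule.sum_mem _ fun I _ => ?_
        set n : comp F M I := ⟨eps F I • m, mem_comp.mpr ⟨m, rfl⟩⟩ with hn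
        have hrepr := (bI I).sum_repr n
        choose x hx using fun j => Ideal.Quotient.mk_surjective ((bI I).repr n j)
        have h6 : ∑ j, x j • bI I j = n := by
          rw [← hrepr]
          exact Finset.sum_congr rfl fun j _ => by rw [← hx j, mk_smul_comp]
        have h7 : eps F I • m = ∑ j, x j • (bI I j : M) := by
          show (n : M) = _
          rw [← h6]
          simp
        rw [h7]
        refine Submodule.sum_mem _ fun j _ => ?_
        rw [← hw I j, smul_smul]
        exact Submodule.smul_mem _ _ (Submodule.subset_span ⟨j, rfl⟩)
      exact Module.Free.of_basis (Basis.mk indep span_top)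
end

section
/- Let D₁ and D₂ be finite-dimensional ℝ-algebras equipped with involutions *₁ and *₂ that are positive, meaning Tr_{D_i/ℝ}(x x^{*_i}) > 0 for all nonzero x ∈ D_i. Then the involution * on D₁ ⊗_ℝ D₂ determined by (d₁ ⊗ d₂)* = d₁^{*₁} ⊗ d₂^{*₂} is positive: Tr_{D₁⊗D₂/ℝ}(y y*) > 0 for all nonzero y ∈ D₁ ⊗_ℝ D₂. -/
open TensorProduct

open LinearMap in
private theorem aux_symm
    (D : Type*) [Ring D] [Algebra ℝ D] [FiniteDimensional ℝ D]
    (sD : D →ₗ[ℝ] D)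
    (hmul : ∀ x y : D, sD (x * y) = sD y * sD x)
    (hinv : ∀ x : D, sD (sD x) = x)
    (hpos : ∀ x : D, x ≠ 0 → 0 < trace ℝ D (mulLeft ℝ (x * sD x))) :
    ∀ x y : D, trace ℝ D (mulLeft ℝ (x * sD y)) = trace ℝ D (mulLeft ℝ (y * sD x)) := by
  set τ : D →ₗ[ℝ] ℝ := (trace ℝ D).comp (LinearMap.mul ℝ D) with hτ
  have hτapp : ∀ z : D, τ z = trace ℝ D (mulLeft ℝ z) := fun z => rfl
  have hcomm : ∀ a b : D, τ (a * b) = τ (b * a) := by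
    intro a b
    have h : ∀ u v : D, mulLeft ℝ (u * v) = (mulLeft ℝ u) * (mulLeft ℝ v) := by
      intro u v; ext w; simp [mul_assoc]
    rw [hτapp, hτapp, h, h, trace_mul_comm]
  have hposτ : ∀ x : D, x ≠ 0 → 0 < τ (x * sD x) := by
    intro x hx; rw [hτapp]; exact hpos x hx
  letI core : InnerProductSpace.Core ℝ D :=
  { inner := fun x y => (τ (x * sD y) + τ (y * sD x)) / 2
    conj_inner_symm := by
      intro x y
      simp only [starRingEnd_apply, star_trivial]
      ring_nf
    re_inner_nonneg := by
      intro x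
      rcases eq_or_ne x 0 with rfl | hx
      · simp
      · have h := hposτ x hx
        simp only [RCLike.re_to_real]
        linarith
    definite := by
      intro x hx
      by_contra hx0
      have h := hposτ x hx0
      change (τ (x * sD x) + τ (x * sD x)) / 2 = 0 at hx
      linarith
    add_left := by
      intro x y z
      simp only [add_mul, mul_add, map_add]
      ring
    smul_left := by
      intro x y r
      simp only [smul_mul_assoc, mul_smul_comm, map_smul, smul_eq_mul,
        starRingEnd_apply, star_trivial]
      ring }
  letI : NormedAddCommGroup D := core.toNormedAddCommGroup
  letI : InnerProductSpace ℝ D := InnerProductSpace.ofCore core.toCore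
  have hinner : ∀ x y : D, (inner ℝ x y : ℝ) = (τ (x * sD y) + τ (y * sD x)) / 2 :=
    fun x y => rfl
  let b := stdOrthonormalBasis ℝ D
  have htr : ∀ f : D →ₗ[ℝ] D, trace ℝ D f = ∑ i, (inner ℝ (b i) (f (b i)) : ℝ) := by
    intro f
    rw [trace_eq_matrix_trace ℝ b.toBasis, Matrix.trace]
    refine Finset.sum_congr rfl fun i _ => ?_
    simp [Matrix.diag, toMatrix_apply, OrthonormalBasis.coe_toBasis_repr_apply,
      OrthonormalBasis.repr_apply_apply]
  have adjlike : ∀ a x y : D, (inner ℝ (a * x) y : ℝ) = inner ℝ x (sD a * y) := by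
    intro a x y
    rw [hinner, hinner, hmul, hmul, hinv]
    have h1 : τ (a * x * sD y) = τ (x * (sD y * a)) := by
      rw [mul_assoc, hcomm, mul_assoc]
    have h2 : τ (y * (sD x * sD a)) = τ (sD a * y * sD x) := by
      rw [← mul_assoc, hcomm, ← mul_assoc]
    rw [h1, h2]
  have key : ∀ z : D, τ (sD z) = τ z := by
    intro z
    rw [hτapp, hτapp, htr, htr]
    refine Finset.sum_congr rfl fun i _ => ?_
    rw [mulLeft_apply, mulLeft_apply, ← adjlike z (b i) (b i), real_inner_comm]
  intro x y
  rw [← hτapp, ← hτapp]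
  have h := key (x * sD y)
  rw [hmul, hinv] at h
  exact h.symm

/-- The tensor product of two positive involutions on finite-dimensional real algebras
is a positive involution. -/
theorem tensor_involution_positive
    (D₁ D₂ : Type*) [Ring D₁] [Ring D₂] [Algebra ℝ D₁] [Algebra ℝ D₂]
    [FiniteDimensional ℝ D₁] [FiniteDimensional ℝ D₂]
    (s₁ : D₁ →ₗ[ℝ] D₁) (s₂ : D₂ →ₗ[ℝ] D₂)
    (hs₁mul : ∀ x y : D₁, s₁ (x * y) = s₁ y * s₁ x)
    (hs₂mul : ∀ x y : D₂, s₂ (x * y) = s₂ y * s₂ x)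
    (hs₁inv : ∀ x : D₁, s₁ (s₁ x) = x)
    (hs₂inv : ∀ x : D₂, s₂ (s₂ x) = x)
    (hs₁pos : ∀ x : D₁, x ≠ 0 → 0 < LinearMap.trace ℝ D₁ (LinearMap.mulLeft ℝ (x * s₁ x)))
    (hs₂pos : ∀ x : D₂, x ≠ 0 → 0 < LinearMap.trace ℝ D₂ (LinearMap.mulLeft ℝ (x * s₂ x)))
    (s : D₁ ⊗[ℝ] D₂ →ₗ[ℝ] D₁ ⊗[ℝ] D₂)
    (hs : ∀ (d₁ : D₁) (d₂ : D₂), s (d₁ ⊗ₜ[ℝ] d₂) = s₁ d₁ ⊗ₜ[ℝ] s₂ d₂) :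
    ∀ y : D₁ ⊗[ℝ] D₂, y ≠ 0 →
      0 < LinearMap.trace ℝ (D₁ ⊗[ℝ] D₂) (LinearMap.mulLeft ℝ (y * s y)) := by
  intro y hy
  have hsym₂ := aux_symm D₂ s₂ hs₂mul hs₂inv hs₂pos
  -- the symmetric bilinear trace form on D₂
  let B₂ : LinearMap.BilinForm ℝ D₂ :=
    (((LinearMap.mul ℝ D₂).compl₂ s₂).compr₂ ((LinearMap.trace ℝ D₂).comp (LinearMap.mul ℝ D₂)))
  have hB₂app : ∀ x z : D₂, B₂ x z = LinearMap.trace ℝ D₂ (LinearMap.mulLeft ℝ (x * s₂ z)) := fun x z => rfl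
  have hB₂symm : B₂.IsSymm := by
    refine ⟨fun x z => ?_⟩
    simp only [RingHom.id_apply, hB₂app]
    exact hsym₂ x z
  obtain ⟨v, hv⟩ := LinearMap.BilinForm.exists_orthogonal_basis (B := B₂) ⟨fun x z => hB₂symm.eq x z⟩
  let e := Module.finBasis ℝ D₁
  let c := Module.Basis.tensorProduct e v
  let a : Fin (Module.finrank ℝ D₂) → D₁ := fun j => ∑ i, c.repr y (i, j) • e i
  have hy' : y = ∑ j, a j ⊗ₜ[ℝ] v j := by
    conv_lhs => rw [← c.sum_repr y]
    rw [Fintype.sum_prod_type, Finset.sum_comm]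
    refine Finset.sum_congr rfl fun j _ => ?_
    simp only [a, c, Module.Basis.tensorProduct_apply, TensorProduct.sum_tmul, TensorProduct.smul_tmul']
  have hex : ∃ j, a j ≠ 0 := by
    by_contra h
    push_neg at h
    apply hy
    rw [hy']
    simp [h]
  -- trace of LinearMap.mulLeft of a pure tensor
  have hml : ∀ (u : D₁) (w : D₂), LinearMap.mulLeft ℝ (u ⊗ₜ[ℝ] w)
      = TensorProduct.map (LinearMap.mulLeft ℝ u) (LinearMap.mulLeft ℝ w) := by
    intro u w
    apply TensorProduct.ext'
    intro p q
    simp [Algebra.TensorProduct.tmul_mul_tmul]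
  have hpure : ∀ (u : D₁) (w : D₂),
      LinearMap.trace ℝ (D₁ ⊗[ℝ] D₂) (LinearMap.mulLeft ℝ (u ⊗ₜ[ℝ] w))
        = LinearMap.trace ℝ D₁ (LinearMap.mulLeft ℝ u) * LinearMap.trace ℝ D₂ (LinearMap.mulLeft ℝ w) := by
    intro u w
    rw [hml, LinearMap.trace_tensorProduct']
  have hys : y * s y = ∑ j, ∑ k, (a j * s₁ (a k)) ⊗ₜ[ℝ] (v j * s₂ (v k)) := by
    conv_lhs => rw [hy', map_sum s]
    simp_rw [hs]
    rw [Finset.sum_mul_sum]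
    simp [Algebra.TensorProduct.tmul_mul_tmul]
  have htr : LinearMap.trace ℝ (D₁ ⊗[ℝ] D₂) (LinearMap.mulLeft ℝ (y * s y))
      = ∑ j, LinearMap.trace ℝ D₁ (LinearMap.mulLeft ℝ (a j * s₁ (a j))) * LinearMap.trace ℝ D₂ (LinearMap.mulLeft ℝ (v j * s₂ (v j))) := by
    have hmlsum : LinearMap.mulLeft ℝ (y * s y)
        = ∑ j, ∑ k, LinearMap.mulLeft ℝ (((a j * s₁ (a k)) ⊗ₜ[ℝ] (v j * s₂ (v k))) : D₁ ⊗[ℝ] D₂) := by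
      rw [hys]
      ext w
      simp [Finset.sum_mul]
    rw [hmlsum, map_sum]
    refine Finset.sum_congr rfl fun j _ => ?_
    rw [map_sum]
    rw [Finset.sum_eq_single j]
    · rw [hpure]
    · intro k _ hk
      rw [hpure]
      have h0 : LinearMap.trace ℝ D₂ (LinearMap.mulLeft ℝ (v j * s₂ (v k))) = 0 := by
        rw [← hB₂app]
        exact hv (Ne.symm hk)
      rw [h0, mul_zero]
    · intro hj
      exact absurd (Finset.mem_univ j) hj
  rw [htr]
  refine Finset.sum_pos' (fun j _ => ?_) ?_
  · rcases eq_or_ne (a j) 0 with h | h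
    · simp [h]
    · exact le_of_lt (mul_pos (hs₁pos _ h) (hs₂pos _ (v.ne_zero j)))
  · obtain ⟨j, hj⟩ := hex
    exact ⟨j, Finset.mem_univ j, mul_pos (hs₁pos _ hj) (hs₂pos _ (v.ne_zero j))⟩
end

section
/- Let k be an algebraically closed field, n ≥ 1, and let ' be an involution (anti-automorphism of order two) on the matrix algebra M_n(k) fixing k. Then there exists an invertible matrix c ∈ M_n(k) with either cᵗ = c or cᵗ = −c such that x' = c xᵗ c^{-1} for all x ∈ M_n(k), and c is unique up to a nonzero scalar. -/
open Matrix

/-- Skolem–Noether for `Mₙ(k)`: every injective unital multiplicative linear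
endomorphism of the matrix algebra is conjugation by an invertible matrix. -/
theorem matrix_aut_inner
    (k : Type*) [Field k] (n : ℕ) (hn : 1 ≤ n)
    (σ : Matrix (Fin n) (Fin n) k →ₗ[k] Matrix (Fin n) (Fin n) k)
    (hmul : ∀ x y, σ (x * y) = σ x * σ y)
    (hinj : Function.Injective σ) :
    ∃ u : Matrix (Fin n) (Fin n) k, IsUnit u ∧ ∀ x, σ x * u = u * x := by
  haveI : NeZero n := ⟨by omega⟩
  set z : Fin n := ⟨0, by omega⟩ with hz
  set f : Fin n → Fin n → Matrix (Fin n) (Fin n) k :=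
    fun a b => σ (Matrix.single a b 1) with hfdef
  have hf : ∀ a b c d, f a b * f c d = if b = c then f a d else 0 := by
    intro a b c d
    rw [hfdef]
    simp only
    rw [← hmul]
    by_cases h : b = c
    · subst h; rw [if_pos rfl, Matrix.single_mul_single_same, one_mul]
    · rw [if_neg h, Matrix.single_mul_single_of_ne _ _ _ _ h, map_zero]
  have hfzz : f z z ≠ 0 := by
    intro h
    have : Matrix.single z z (1 : k) = 0 := hinj (by simpa using h)
    have := congrFun (congrFun this z) z
    simp [Matrix.single_apply_same] at this
  obtain ⟨i0, j0, hij0⟩ : ∃ i0 j0, f z z i0 j0 ≠ 0 := by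
    by_contra h
    push_neg at h
    exact hfzz (by ext i j; simpa using h i j)
  set v : Fin n → k := fun i => f z z i j0 with hvdef
  have hv : f z z *ᵥ v = v := by
    have h := hf z z z z
    rw [if_pos rfl] at h
    funext i
    have := congrFun (congrFun h i) j0
    simpa [Matrix.mulVec, dotProduct, Matrix.mul_apply, hvdef] using this
  set u : Matrix (Fin n) (Fin n) k := Matrix.of fun i l => (f l z *ᵥ v) i with hudef
  have hcol : ∀ (A : Matrix (Fin n) (Fin n) k) i l, (A * u) i l = ((A * f l z) *ᵥ v) i := by
    intro A i l
    simp only [Matrix.mul_apply, hudef, Matrix.of_apply, Matrix.mulVec, dotProduct,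
      Finset.mul_sum, Finset.sum_mul, mul_assoc]
    rw [Finset.sum_comm]
  -- f z m * u  has columns:  v in position m, 0 elsewhere
  have hfzmu : ∀ m i l, (f z m * u) i l = if m = l then v i else 0 := by
    intro m i l
    rw [hcol, hf]
    by_cases h : m = l
    · rw [if_pos h, if_pos h, hv]
    · rw [if_neg h, if_neg h, Matrix.zero_mulVec, Pi.zero_apply]
  have hu : IsUnit u := by
    rw [← Matrix.mulVec_injective_iff_isUnit]
    have key : ∀ w, u *ᵥ w = 0 → w = 0 := by
      intro w hw
      funext m
      have h1 : f z m *ᵥ (u *ᵥ w) = 0 := by rw [hw, Matrix.mulVec_zero]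
      rw [Matrix.mulVec_mulVec] at h1
      have h2 := congrFun h1 i0
      have h3 : ((f z m * u) *ᵥ w) i0 = v i0 * w m := by
        simp only [Matrix.mulVec, dotProduct, hfzmu]
        rw [Finset.sum_eq_single m]
        · simp
        · intro b _ hb; rw [if_neg (Ne.symm hb), zero_mul]
        · intro h; exact absurd (Finset.mem_univ m) h
      rw [h3] at h2
      rcases mul_eq_zero.mp h2 with h | h
      · exact absurd h hij0
      · simpa using h
    intro w w' hww
    have : u *ᵥ (w - w') = 0 := by
      rw [Matrix.mulVec_sub, hww, sub_self]
    have := key _ this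
    funext i
    have := congrFun this i
    simp only [Pi.sub_apply, Pi.zero_apply, sub_eq_zero] at this
    exact this
  refine ⟨u, hu, ?_⟩
  -- first on basis matrices
  have hbasis : ∀ a b, f a b * u = u * Matrix.single a b 1 := by
    intro a b
    ext i l
    rw [hcol, hf]
    by_cases h : b = l
    · subst h
      rw [if_pos rfl, Matrix.mul_single_apply_same, mul_one]
      simp [hudef]
    · rw [if_neg h, Matrix.zero_mulVec, Pi.zero_apply]
      exact (Matrix.mul_single_apply_of_ne 1 a b i l (fun hl => h hl.symm) u).symm
  intro x
  nth_rewrite 1 [matrix_eq_sum_single x]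
  rw [map_sum, Finset.sum_mul]
  nth_rewrite 2 [matrix_eq_sum_single x]
  rw [Finset.mul_sum]
  apply Finset.sum_congr rfl
  intro i _
  rw [map_sum, Finset.sum_mul, Finset.mul_sum]
  apply Finset.sum_congr rfl
  intro j _
  have : Matrix.single i j (x i j) = x i j • Matrix.single i j 1 := by
    rw [Matrix.smul_single, smul_eq_mul, mul_one]
  rw [this, _root_.map_smul, Matrix.smul_mul, Matrix.mul_smul, hbasis]

/-- Any involution of the matrix algebra `Mₙ(k)` fixing `k` is of the form
`x ↦ c xᵀ c⁻¹` for an invertible symmetric or antisymmetric matrix `c`,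
unique up to a nonzero scalar. -/
theorem involution_matrix_algebra
    (k : Type*) [Field k] [IsAlgClosed k] (n : ℕ) (hn : 1 ≤ n)
    (s : Matrix (Fin n) (Fin n) k →ₗ[k] Matrix (Fin n) (Fin n) k)
    (hone : s 1 = 1)
    (hmul : ∀ x y, s (x * y) = s y * s x)
    (hinv : ∀ x, s (s x) = x) :
    ∃ c : Matrix (Fin n) (Fin n) k, IsUnit c ∧ (cᵀ = c ∨ cᵀ = -c) ∧
      (∀ x, s x = c * xᵀ * c⁻¹) ∧
      (∀ c' : Matrix (Fin n) (Fin n) k, IsUnit c' → (∀ x, s x = c' * xᵀ * c'⁻¹) →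
        ∃ l : k, l ≠ 0 ∧ c' = l • c) := by
  haveI : NeZero n := ⟨by omega⟩
  set σ : Matrix (Fin n) (Fin n) k →ₗ[k] Matrix (Fin n) (Fin n) k :=
    { toFun := fun x => s xᵀ,
      map_add' := fun x y => by
        show s (x + y)ᵀ = s xᵀ + s yᵀ
        rw [Matrix.transpose_add, map_add],
      map_smul' := fun r x => by
        show s (r • x)ᵀ = r • s xᵀ
        rw [Matrix.transpose_smul, _root_.map_smul] } with hσ
  have hσmul : ∀ x y, σ (x * y) = σ x * σ y := by
    intro x y
    simp only [hσ, LinearMap.coe_mk, AddHom.coe_mk]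
    rw [Matrix.transpose_mul, hmul]
  have hsinj : Function.Injective s := fun a b h => by rw [← hinv a, h, hinv]
  have hσinj : Function.Injective σ := by
    intro a b h
    simp only [hσ, LinearMap.coe_mk, AddHom.coe_mk] at h
    have := hsinj h
    rwa [Matrix.transpose_inj] at this
  obtain ⟨u, hu, hcomm⟩ := matrix_aut_inner k n hn σ hσmul hσinj
  have hdet : IsUnit u.det := (Matrix.isUnit_iff_isUnit_det u).mp hu
  have huu : u * u⁻¹ = 1 := Matrix.mul_nonsing_inv u hdet
  have huu' : u⁻¹ * u = 1 := Matrix.nonsing_inv_mul u hdet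
  have hdt : IsUnit uᵀ.det := by rwa [Matrix.det_transpose]
  have h1 : uᵀ * uᵀ⁻¹ = 1 := Matrix.mul_nonsing_inv _ hdt
  have h2 : uᵀ⁻¹ * uᵀ = 1 := Matrix.nonsing_inv_mul _ hdt
  have htinv : u⁻¹ᵀ = uᵀ⁻¹ := Matrix.transpose_nonsing_inv u
  have hs : ∀ x, s x = u * xᵀ * u⁻¹ := by
    intro x
    have hx : s x * u = u * xᵀ := by
      have := hcomm xᵀ
      simp only [hσ, LinearMap.coe_mk, AddHom.coe_mk, Matrix.transpose_transpose] at this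
      exact this
    calc s x = s x * (u * u⁻¹) := by rw [huu, mul_one]
      _ = (s x * u) * u⁻¹ := by rw [mul_assoc]
      _ = u * xᵀ * u⁻¹ := by rw [hx]
  set w := u * uᵀ⁻¹ with hwdef
  have hwx : ∀ x, w * x = x * w := by
    intro x
    have h' : u * (uᵀ⁻¹ * (x * uᵀ)) = x * u := by
      have hh : u * (u * xᵀ * u⁻¹)ᵀ * u⁻¹ = x := by
        rw [← hs x, ← hs (s x), hinv]
      have hh2 := congrArg (· * u) hh
      simp only [Matrix.transpose_mul, Matrix.transpose_transpose, htinv, mul_assoc] at hh2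
      rw [huu', mul_one] at hh2
      simpa only [mul_assoc] using hh2
    have h'' := congrArg (· * uᵀ⁻¹) h'
    simp only [mul_assoc] at h''
    rw [h1, mul_one] at h''
    simp only [hwdef, mul_assoc]
    exact h''
  obtain ⟨r, hr⟩ := Matrix.mem_range_scalar_of_commute_single
    (M := w) (fun i j _ => (hwx _).symm)
  have hw_eq : w = r • (1 : Matrix (Fin n) (Fin n) k) := by
    rw [← hr, Matrix.scalar_apply, smul_one_eq_diagonal]
  have hu_rt : u = r • uᵀ := by
    calc u = u * (uᵀ⁻¹ * uᵀ) := by rw [h2, mul_one]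
      _ = w * uᵀ := by rw [hwdef, mul_assoc]
      _ = (r • 1) * uᵀ := by rw [hw_eq]
      _ = r • uᵀ := by rw [Matrix.smul_mul, one_mul]
  have hut : uᵀ = r • u := by
    calc uᵀ = (r • uᵀ)ᵀ := by rw [← hu_rt]
      _ = r • u := by rw [Matrix.transpose_smul, Matrix.transpose_transpose]
  have hune : u ≠ 0 := by
    intro h0
    have : (1 : Matrix (Fin n) (Fin n) k) = 0 := by rw [← huu, h0, zero_mul]
    exact one_ne_zero this
  have hr2 : r * r = 1 := by
    have : u = (r * r) • u := by
      calc u = r • uᵀ := hu_rt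
        _ = r • (r • u) := by rw [hut]
        _ = (r * r) • u := smul_smul r r u
    have h3 : (r * r - 1) • u = 0 := by
      rw [sub_smul, one_smul, ← this, sub_self]
    rcases smul_eq_zero.mp h3 with h | h
    · exact sub_eq_zero.mp h
    · exact absurd h hune
  refine ⟨u, hu, ?_, hs, ?_⟩
  · rcases mul_self_eq_one_iff.mp hr2 with h | h
    · left; rw [hut, h, one_smul]
    · right; rw [hut, h, neg_smul, one_smul]
  · intro c' hu' hs'
    have hdet' : IsUnit c'.det := (Matrix.isUnit_iff_isUnit_det c').mp hu'
    have hcc : c' * c'⁻¹ = 1 := Matrix.mul_nonsing_inv c' hdet'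
    have hcc' : c'⁻¹ * c' = 1 := Matrix.nonsing_inv_mul c' hdet'
    have hconj : ∀ y : Matrix (Fin n) (Fin n) k, c' * y * c'⁻¹ = u * y * u⁻¹ := by
      intro y
      have := (hs' yᵀ).symm.trans (hs yᵀ)
      rwa [Matrix.transpose_transpose] at this
    set d := u⁻¹ * c' with hddef
    have hdx : ∀ y, d * y = y * d := by
      intro y
      have h := hconj y
      have h' := congrArg (fun m => u⁻¹ * m * c') h
      simp only [mul_assoc] at h'
      rw [hcc', mul_one, ← mul_assoc u⁻¹ u, huu', one_mul] at h'
      simp only [hddef, mul_assoc]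
      exact h'
    obtain ⟨l, hl⟩ := Matrix.mem_range_scalar_of_commute_single
      (M := d) (fun i j _ => (hdx _).symm)
    have hd_eq : d = l • (1 : Matrix (Fin n) (Fin n) k) := by
      rw [← hl, Matrix.scalar_apply, smul_one_eq_diagonal]
    have hc'd : c' = u * d := by
      rw [hddef, ← mul_assoc, huu, one_mul]
    refine ⟨l, ?_, ?_⟩
    · intro h0
      rw [h0, zero_smul] at hd_eq
      rw [hd_eq, mul_zero] at hc'd
      rw [hc'd] at hu'
      exact (not_isUnit_zero : ¬IsUnit (0 : Matrix (Fin n) (Fin n) k)) hu'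
    · rw [hc'd, hd_eq, Matrix.mul_smul, mul_one]
end

section
/- Let r ≥ 1 and f ≥ 1 be integers and consider the set of lattice points P = {((r−κ)f, (j−1)f + ℓ) : 1 ≤ j ≤ j+κ ≤ r, 0 ≤ ℓ ≤ f−1} inside the rectangle [0, 2rf] × [0, rf] (the positions of the deformation parameters t^ℓ_{κ+j,j}). Then the number of points of P lying on or above the straight line from (0,0) to (2rf, rf) (the supersingular Newton polygon of slope 1/2) equals ∑_{i=1}^{r} ⌊i f / 2⌋. -/
/-- The number of positions `((r-κ)f, (j-1)f+ℓ)` (for `0 ≤ ℓ < f`, `0 ≤ κ`, `1 ≤ j`,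
`j + κ ≤ r`) lying on or above the line of slope `1/2` through the origin equals
`∑_{i=1}^{r} ⌊i f / 2⌋`, the dimension of the supersingular Newton stratum. -/
theorem supersingular_stratum_dimension (r f : ℕ) (hr : 1 ≤ r) (hf : 1 ≤ f) :
    (((((Finset.range f) ×ˢ (Finset.range r) ×ˢ (Finset.Icc 1 r)).filter
        (fun t : ℕ × ℕ × ℕ => t.2.2 + t.2.1 ≤ r)).image
        (fun t : ℕ × ℕ × ℕ => ((r - t.2.1) * f, (t.2.2 - 1) * f + t.1))).filter
        (fun q : ℕ × ℕ => q.1 ≤ 2 * q.2)).card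
      = ∑ i ∈ Finset.Icc 1 r, i * f / 2 := by
  have hf0 : 0 < f := hf
  have key : ((((Finset.range f) ×ˢ (Finset.range r) ×ˢ (Finset.Icc 1 r)).filter
        (fun t : ℕ × ℕ × ℕ => t.2.2 + t.2.1 ≤ r)).image
        (fun t : ℕ × ℕ × ℕ => ((r - t.2.1) * f, (t.2.2 - 1) * f + t.1))).filter
        (fun q : ℕ × ℕ => q.1 ≤ 2 * q.2)
      = (Finset.Icc 1 r).biUnion
        (fun m => ({m * f} : Finset ℕ) ×ˢ Finset.Ico ((m * f + 1) / 2) (m * f)) := by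
    ext q
    simp only [Finset.mem_filter, Finset.mem_image, Finset.mem_product, Finset.mem_range,
      Finset.mem_Icc, Finset.mem_biUnion, Finset.mem_Ico, Finset.mem_singleton, Prod.ext_iff]
    constructor
    · rintro ⟨⟨⟨ℓ, κ, j⟩, ⟨⟨hℓ, hκ, hj1, hjr⟩, hsum⟩, hq1, hq2⟩, hline⟩
      dsimp only at hℓ hκ hj1 hjr hsum hq1 hq2
      obtain ⟨j', rfl⟩ : ∃ j', j = j' + 1 := ⟨j - 1, by omega⟩
      simp only [Nat.add_sub_cancel] at hq2
      have hjm : j' + 1 ≤ r - κ := by omega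
      have h2 : (j' + 1) * f ≤ (r - κ) * f := Nat.mul_le_mul_right f hjm
      have h3 : (j' + 1) * f = j' * f + f := by ring
      exact ⟨r - κ, ⟨by omega, by omega⟩, hq1.symm, by omega, by omega⟩
    · rintro ⟨m, ⟨hm1, hmr⟩, hq1, hy1, hy2⟩
      have hd : q.2 / f * f + q.2 % f = q.2 := Nat.div_add_mod' q.2 f
      have hdm : q.2 / f < m := (Nat.div_lt_iff_lt_mul hf0).mpr hy2
      have hmod : q.2 % f < f := Nat.mod_lt _ hf0
      refine ⟨⟨⟨q.2 % f, r - m, q.2 / f + 1⟩, ⟨⟨?_, ?_, ?_, ?_⟩, ?_⟩, ?_, ?_⟩, ?_⟩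
      · exact hmod
      · dsimp only; omega
      · dsimp only; exact Nat.le_add_left 1 _
      · dsimp only; omega
      · dsimp only; omega
      · dsimp only
        have hrm : r - (r - m) = m := by omega
        rw [hrm]; exact hq1.symm
      · dsimp only
        simpa using hd
      · omega
  rw [key, Finset.card_biUnion]
  · refine Finset.sum_congr rfl fun m _ => ?_
    rw [Finset.card_product, Finset.card_singleton, Nat.card_Ico, one_mul]
    omega
  · intro m hm n hn hmn
    simp only [Finset.disjoint_left, Finset.mem_product, Finset.mem_singleton]
    rintro q ⟨h1, -⟩ ⟨h2, -⟩
    exact hmn (Nat.eq_of_mul_eq_mul_right hf0 (h1 ▸ h2 ▸ rfl))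
end
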